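/- (Endpoint interpolation estimate, α = ∞.) There exists a constant C > 0 such that for every measurable f : ℝ³×ℝ³ → [0,∞) with f ∈ L^∞(ℝ⁶) and ∫∫_{ℝ⁶} |p|² f(q,p) dq dp < ∞, the spatial density satisfies ‖ρ_f‖_{L^{5/3}(ℝ³)} ≤ C ‖f‖_{L^∞(ℝ⁶)}^{2/5} · ( ∫∫_{ℝ⁶} |p|² f(q,p) dq dp )^{3/5}. -/

import Mathlib

open MeasureTheory Real ENNReal

noncomputable section

abbrev E3 := EuclideanSpace ℝ (Fin 3)

/-- The spatial density `ρ_f(x) = ∫ f(x,p) dp` of a phase-space distribution. -/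
def rhoOf (f : E3 × E3 → ℝ) (x : E3) : ℝ := ∫ p : E3, f (x, p)

lemma opt_lemma {L c a k : ℝ} (hc : 0 < c) (ha : 0 < a) (hk : 0 ≤ k)
    (h : ∀ R : ℝ, 0 < R → L ≤ c * a * R ^ 3 + k * (R ^ 2)⁻¹) :
    L ≤ 2 * (c * a) ^ (2/5:ℝ) * k ^ (3/5:ℝ) := by
  have hca : 0 < c * a := mul_pos hc ha
  rcases eq_or_lt_of_le hk with hk0 | hk0
  · have hL : L ≤ 0 := by
      refine le_of_forall_pos_le_add ?_
      intro ε hε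
      have hR : 0 < (ε / (c * a)) ^ (1/3 : ℝ) := rpow_pos_of_pos (div_pos hε hca) _
      have h3 : ((ε / (c*a)) ^ (1/3:ℝ)) ^ 3 = ε / (c*a) := by
        rw [← Real.rpow_natCast (((ε / (c*a)) ^ (1/3:ℝ))) 3, ← Real.rpow_mul (div_pos hε hca).le]
        norm_num
      have := h _ hR
      rw [h3, ← hk0] at this
      calc L ≤ c * a * (ε / (c*a)) + 0 * _ := this
        _ ≤ 0 + ε := by rw [mul_div_cancel₀ _ hca.ne', zero_mul]; linarith
    have : (0:ℝ) ^ (3/5:ℝ) = 0 := by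
      rw [Real.zero_rpow]; norm_num
    rw [← hk0, this, mul_zero]
    exact hL
  · set R := (k / (c * a)) ^ (1/5 : ℝ) with hRdef
    have hkca : 0 < k / (c*a) := div_pos hk0 hca
    have hR : 0 < R := rpow_pos_of_pos hkca _
    have hR3 : R ^ 3 = (k / (c*a)) ^ (3/5 : ℝ) := by
      rw [← Real.rpow_natCast R 3, hRdef, ← Real.rpow_mul hkca.le]
      norm_num
    have hR2 : R ^ 2 = (k / (c*a)) ^ (2/5 : ℝ) := by
      rw [← Real.rpow_natCast R 2, hRdef, ← Real.rpow_mul hkca.le]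
      norm_num
    have e1 : c * a * R ^ 3 = (c*a) ^ (2/5:ℝ) * k ^ (3/5:ℝ) := by
      rw [hR3, Real.div_rpow hk hca.le]
      rw [mul_div_assoc', mul_comm]
      rw [div_eq_iff (by positivity : ((c*a) ^ (3/5:ℝ)) ≠ 0)]
      rw [mul_comm ((c*a) ^ (2/5:ℝ)) _, mul_assoc, ← Real.rpow_add hca]
      norm_num
    have e2 : k * (R ^ 2)⁻¹ = (c*a) ^ (2/5:ℝ) * k ^ (3/5:ℝ) := by
      rw [hR2, Real.div_rpow hk hca.le, inv_div]
      have h5 : k ^ (3/5:ℝ) = k / k ^ (2/5:ℝ) := by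
        rw [show (3/5:ℝ) = 1 - 2/5 by norm_num, Real.rpow_sub hk0, Real.rpow_one]
      rw [h5]; ring
    have := h R hR
    rw [e1, e2] at this
    linarith

/-- Endpoint interpolation estimate (`α = ∞`): there is `C > 0` such that for every
nonnegative measurable `f ∈ L^∞(ℝ⁶)` with finite kinetic integral,
`‖ρ_f‖_{L^{5/3}} ≤ C ‖f‖_{L^∞}^{2/5} (∫∫ |p|² f)^{3/5}`. -/
theorem endpoint_interpolation_estimate :
    ∃ C > (0 : ℝ), ∀ f : E3 × E3 → ℝ, Measurable f → (∀ z, 0 ≤ f z) →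
      MemLp f ⊤ →
      Integrable (fun z : E3 × E3 => ‖z.2‖ ^ 2 * f z) →
      eLpNorm (rhoOf f) (ENNReal.ofReal (5 / 3)) volume ≤
        ENNReal.ofReal (C * (eLpNorm f ⊤ volume).toReal ^ (2 / 5 : ℝ) *
          (∫ z : E3 × E3, ‖z.2‖ ^ 2 * f z) ^ (3 / 5 : ℝ)) := by
  classical
  set c : ℝ≥0∞ := volume (Metric.ball (0:E3) 1) with hcdef
  have hc0 : 0 < c := Metric.measure_ball_pos _ _ one_pos
  have hcT : c < ⊤ := measure_ball_lt_top
  set cr : ℝ := c.toReal with hcrdef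
  have hcr0 : 0 < cr := ENNReal.toReal_pos hc0.ne' hcT.ne
  have hcre : ENNReal.ofReal cr = c := ENNReal.ofReal_toReal hcT.ne
  refine ⟨2 * cr ^ (2/5:ℝ), by positivity, ?_⟩
  intro f hfm hf0 hfT hK
  set Ir : ℝ := ∫ z : E3 × E3, ‖z.2‖ ^ 2 * f z with hIr
  have hIr0 : 0 ≤ Ir := integral_nonneg fun z => mul_nonneg (by positivity) (hf0 z)
  set A : ℝ≥0∞ := eLpNorm f ⊤ volume with hA
  have hAT : A < ⊤ := hfT.2
  set a : ℝ := A.toReal with ha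
  have ha0 : (0:ℝ) ≤ a := ENNReal.toReal_nonneg
  have hAe : ENNReal.ofReal a = A := ENNReal.ofReal_toReal hAT.ne
  rcases eq_or_lt_of_le ha0 with ha0' | ha0'
  · -- degenerate case `‖f‖_∞ = 0`
    have hA0 : A = 0 := by rw [← hAe, ← ha0', ENNReal.ofReal_zero]
    have hf0' : f =ᵐ[volume] 0 := by
      have : eLpNormEssSup f volume = 0 := by
        rw [← eLpNorm_exponent_top, ← hA]; exact hA0
      exact eLpNormEssSup_eq_zero_iff.mp this
    have hρ : rhoOf f =ᵐ[(volume : Measure E3)] 0 := by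
      rw [Measure.volume_eq_prod] at hf0'
      filter_upwards [Measure.ae_ae_of_ae_prod hf0'] with x hx
      have : (fun p : E3 => f (x, p)) =ᵐ[(volume : Measure E3)] 0 := hx
      simp only [rhoOf, Pi.zero_apply]
      rw [integral_congr_ae this]
      simp
    calc eLpNorm (rhoOf f) (ENNReal.ofReal (5 / 3)) volume
        = 0 := by rw [eLpNorm_congr_ae hρ]; exact eLpNorm_zero
      _ ≤ _ := zero_le
  · -- main case
    set g : E3 × E3 → ℝ≥0∞ := fun z => ENNReal.ofReal (f z) with hg
    have hgm : Measurable g := hfm.ennreal_ofReal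
    have hbd : ∀ᵐ z : E3 × E3 ∂((volume : Measure E3).prod volume), g z ≤ A := by
      rw [← Measure.volume_eq_prod]
      have h1 : ∀ᵐ z : E3 × E3 ∂volume, (‖f z‖₊ : ℝ≥0∞) ≤ eLpNormEssSup f volume :=
        ae_le_eLpNormEssSup
      filter_upwards [h1] with z hz
      have : g z = (‖f z‖₊ : ℝ≥0∞) := by
        rw [hg]; exact (Real.enorm_eq_ofReal (hf0 z)).symm
      rw [this, hA, eLpNorm_exponent_top]
      exact hz
    set Kl : E3 → ℝ≥0∞ := fun x => ∫⁻ p : E3, ENNReal.ofReal (‖p‖^2) * g (x, p) with hKl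
    have hunc : Measurable (fun z : E3 × E3 => ENNReal.ofReal (‖z.2‖^2) * g z) :=
      (measurable_snd.norm.pow_const 2).ennreal_ofReal.mul hgm
    have hKlm : Measurable Kl := Measurable.lintegral_prod_right hunc
    set L : E3 → ℝ≥0∞ := fun x => ∫⁻ p : E3, g (x, p) with hL
    have hLm : Measurable L := Measurable.lintegral_prod_right hgm
    have hKint : ∫⁻ x : E3, Kl x = ENNReal.ofReal Ir := by
      have h1 : ∫⁻ z : E3 × E3, ENNReal.ofReal (‖z.2‖^2) * g z ∂volume = ∫⁻ x : E3, Kl x := by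
        rw [Measure.volume_eq_prod, lintegral_prod _ hunc.aemeasurable]
      rw [← h1, hIr, ofReal_integral_eq_lintegral_ofReal hK
        (ae_of_all _ fun z => mul_nonneg (by positivity) (hf0 z))]
      exact lintegral_congr fun z => (ENNReal.ofReal_mul (by positivity)).symm
    have hKfin : ∀ᵐ x : E3, Kl x < ⊤ :=
      ae_lt_top hKlm (by rw [hKint]; exact ENNReal.ofReal_ne_top)
    have hslice : ∀ᵐ x : E3, ∀ᵐ p : E3, g (x, p) ≤ A := by
      exact Measure.ae_ae_of_ae_prod hbd
    have key : ∀ᵐ x : E3, (L x).toReal ≤ 2 * (cr * a) ^ (2/5:ℝ) * ((Kl x).toReal) ^ (3/5:ℝ) := by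
      filter_upwards [hslice, hKfin] with x hx hKx
      have hRbd : ∀ R : ℝ, 0 < R →
          L x ≤ ENNReal.ofReal (cr * a * R ^ 3 + (Kl x).toReal * (R^2)⁻¹) := by
        intro R hR
        have hsplit : L x = (∫⁻ p in Metric.ball (0:E3) R, g (x,p)) +
            ∫⁻ p in (Metric.ball (0:E3) R)ᶜ, g (x,p) :=
          (lintegral_add_compl _ measurableSet_ball).symm
        have h1 : ∫⁻ p in Metric.ball (0:E3) R, g (x,p) ≤ A * (ENNReal.ofReal (R^3) * c) := by
          calc ∫⁻ p in Metric.ball (0:E3) R, g (x,p)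
              ≤ ∫⁻ _ in Metric.ball (0:E3) R, A := lintegral_mono_ae (ae_restrict_of_ae hx)
            _ = A * volume (Metric.ball (0:E3) R) := setLIntegral_const _ _
            _ = A * (ENNReal.ofReal (R^3) * c) := by
                rw [Measure.addHaar_ball volume _ hR.le]
                congr 2
                simp
        have h2 : ∫⁻ p in (Metric.ball (0:E3) R)ᶜ, g (x,p)
            ≤ ENNReal.ofReal ((R^2)⁻¹) * Kl x := by
          have hpt : ∀ᵐ p : E3 ∂(volume.restrict (Metric.ball (0:E3) R)ᶜ),
              g (x,p) ≤ ENNReal.ofReal ((R^2)⁻¹) * (ENNReal.ofReal (‖p‖^2) * g (x,p)) := by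
            refine (ae_restrict_iff' measurableSet_ball.compl).mpr (ae_of_all _ fun p hp => ?_)
            have hnp : R ≤ ‖p‖ := by
              simpa [Metric.mem_ball, dist_zero_right] using hp
            have h1le : (1:ℝ≥0∞) ≤ ENNReal.ofReal ((R^2)⁻¹) * ENNReal.ofReal (‖p‖^2) := by
              rw [← ENNReal.ofReal_mul (by positivity), ← ENNReal.ofReal_one]
              apply ENNReal.ofReal_le_ofReal
              rw [← div_eq_inv_mul, le_div_iff₀ (by positivity), one_mul]
              exact pow_le_pow_left₀ hR.le hnp 2
            calc g (x,p) = 1 * g (x,p) := (one_mul _).symm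
              _ ≤ (ENNReal.ofReal ((R^2)⁻¹) * ENNReal.ofReal (‖p‖^2)) * g (x,p) :=
                  mul_le_mul_left h1le _
              _ = ENNReal.ofReal ((R^2)⁻¹) * (ENNReal.ofReal (‖p‖^2) * g (x,p)) := mul_assoc _ _ _
          calc ∫⁻ p in (Metric.ball (0:E3) R)ᶜ, g (x,p)
              ≤ ∫⁻ p in (Metric.ball (0:E3) R)ᶜ,
                  ENNReal.ofReal ((R^2)⁻¹) * (ENNReal.ofReal (‖p‖^2) * g (x,p)) :=
                lintegral_mono_ae hpt
            _ ≤ ∫⁻ p : E3, ENNReal.ofReal ((R^2)⁻¹) * (ENNReal.ofReal (‖p‖^2) * g (x,p)) :=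
                setLIntegral_le_lintegral _ _
            _ = ENNReal.ofReal ((R^2)⁻¹) * Kl x :=
                lintegral_const_mul _
                  ((measurable_norm.pow_const 2).ennreal_ofReal.mul
                    (hgm.comp (measurable_prodMk_left)))
        calc L x ≤ A * (ENNReal.ofReal (R^3) * c) + ENNReal.ofReal ((R^2)⁻¹) * Kl x := by
              rw [hsplit]; exact add_le_add h1 h2
          _ = ENNReal.ofReal (cr * a * R^3 + (Kl x).toReal * (R^2)⁻¹) := by
              rw [ENNReal.ofReal_add (by positivity) (by positivity)]
              congr 1
              · rw [← hAe, ← hcre, ← ENNReal.ofReal_mul (by positivity : (0:ℝ) ≤ R^3),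
                  ← ENNReal.ofReal_mul ha0]
                congr 1
                ring
              · rw [← ENNReal.ofReal_toReal hKx.ne, ← ENNReal.ofReal_mul (by positivity)]
                rw [ENNReal.ofReal_toReal hKx.ne]
                congr 1
                ring
      have hRd : ∀ R : ℝ, 0 < R →
          (L x).toReal ≤ cr * a * R ^ 3 + (Kl x).toReal * (R^2)⁻¹ := fun R hR =>
        ENNReal.toReal_le_of_le_ofReal
          (add_nonneg (by positivity)
            (mul_nonneg ENNReal.toReal_nonneg (by positivity))) (hRbd R hR)
      exact opt_lemma hcr0 ha0' ENNReal.toReal_nonneg hRd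
    have hrho : ∀ x : E3, rhoOf f x = (L x).toReal := fun x => by
      rw [rhoOf, integral_eq_lintegral_of_nonneg_ae (ae_of_all _ fun p => hf0 _)
        ((hfm.comp measurable_prodMk_left).aestronglyMeasurable)]
    set D : ℝ≥0∞ := ENNReal.ofReal (2 * (cr*a)^(2/5:ℝ)) with hD
    have hptw : ∀ᵐ x : E3, (‖rhoOf f x‖₊ : ℝ≥0∞) ^ (5/3:ℝ) ≤ D ^ (5/3:ℝ) * Kl x := by
      filter_upwards [key, hKfin] with x hx hKx
      have h1 : (‖rhoOf f x‖₊ : ℝ≥0∞) = ENNReal.ofReal (rhoOf f x) :=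
        Real.enorm_eq_ofReal (by rw [hrho]; exact ENNReal.toReal_nonneg)
      rw [h1, hrho]
      have h2 : ENNReal.ofReal ((L x).toReal) ≤ D * (Kl x) ^ (3/5:ℝ) := by
        calc ENNReal.ofReal ((L x).toReal)
            ≤ ENNReal.ofReal (2*(cr*a)^(2/5:ℝ) * ((Kl x).toReal)^(3/5:ℝ)) :=
              ENNReal.ofReal_le_ofReal hx
          _ = D * ENNReal.ofReal (((Kl x).toReal)^(3/5:ℝ)) :=
              ENNReal.ofReal_mul (by positivity)
          _ = D * (Kl x) ^ (3/5:ℝ) := by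
              rw [← ENNReal.ofReal_rpow_of_nonneg ENNReal.toReal_nonneg (by norm_num),
                ENNReal.ofReal_toReal hKx.ne]
      calc (ENNReal.ofReal ((L x).toReal)) ^ (5/3:ℝ)
          ≤ (D * (Kl x)^(3/5:ℝ)) ^ (5/3:ℝ) := ENNReal.rpow_le_rpow h2 (by norm_num)
        _ = D ^ (5/3:ℝ) * Kl x := by
            rw [ENNReal.mul_rpow_of_nonneg _ _ (by norm_num : (0:ℝ) ≤ 5/3),
              ← ENNReal.rpow_mul]
            norm_num
    have hp0 : (ENNReal.ofReal (5/3 : ℝ)) ≠ 0 :=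
      (ENNReal.ofReal_pos.mpr (by norm_num)).ne'
    have hpt5 : (ENNReal.ofReal (5/3 : ℝ)).toReal = 5/3 := ENNReal.toReal_ofReal (by norm_num)
    rw [eLpNorm_eq_lintegral_rpow_enorm_toReal hp0 ENNReal.ofReal_ne_top, hpt5]
    calc (∫⁻ x : E3, (‖rhoOf f x‖₊ : ℝ≥0∞) ^ (5/3:ℝ)) ^ ((1:ℝ)/(5/3))
        ≤ (D ^ (5/3:ℝ) * ENNReal.ofReal Ir) ^ ((1:ℝ)/(5/3)) := by
          apply ENNReal.rpow_le_rpow _ (by norm_num)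
          rw [← hKint, ← lintegral_const_mul _ hKlm]
          exact lintegral_mono_ae hptw
      _ = D * (ENNReal.ofReal Ir) ^ (3/5:ℝ) := by
          rw [show ((1:ℝ)/(5/3)) = (3/5:ℝ) by norm_num,
            ENNReal.mul_rpow_of_nonneg _ _ (by norm_num : (0:ℝ) ≤ 3/5),
            ← ENNReal.rpow_mul]
          norm_num
      _ = ENNReal.ofReal (2 * cr ^ (2/5:ℝ) * a ^ (2/5:ℝ) * Ir ^ (3/5:ℝ)) := by
          rw [hD, ENNReal.ofReal_rpow_of_nonneg hIr0 (by norm_num),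
            ← ENNReal.ofReal_mul (by positivity)]
          congr 1
          rw [Real.mul_rpow hcr0.le ha0]
          ring

end
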